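/- For all k, ℓ ≥ 1, the closure of the commutator subgroup [N_k, N_ℓ] in SL₂(ℤ₃) equals N_{k+ℓ}. -/

import Mathlib

open Matrix MatrixGroups
open scoped commutatorElement

noncomputable section

/-- The topology on `SL(n, R)` induced from the space of matrices. -/
instance {n : Type*} [DecidableEq n] [Fintype n] {R : Type*} [CommRing R] [TopologicalSpace R] :
    TopologicalSpace (SpecialLinearGroup n R) :=
  inferInstanceAs (TopologicalSpace {A : Matrix n n R // A.det = 1})

/-- `SL(n, R)` is a topological group. -/
instance {n : Type*} [DecidableEq n] [Fintype n] {R : Type*} [CommRing R] [TopologicalSpace R]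
    [IsTopologicalRing R] : IsTopologicalGroup (SpecialLinearGroup n R) where
  continuous_mul := by
    apply continuous_induced_rng.2
    exact (continuous_subtype_val.comp continuous_fst).mul (continuous_subtype_val.comp continuous_snd)
  continuous_inv := by
    have h : Continuous fun A : SpecialLinearGroup n R => ((A : Matrix n n R)).adjugate :=
      Continuous.matrix_adjugate continuous_subtype_val
    have e : (fun A : SpecialLinearGroup n R => ((A⁻¹ : SpecialLinearGroup n R) : Matrix n n R))
        = fun A : SpecialLinearGroup n R => ((A : Matrix n n R)).adjugate := by
      funext A; exact Matrix.SpecialLinearGroup.coe_inv A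
    apply continuous_induced_rng.2
    show Continuous fun A : SpecialLinearGroup n R => ((A⁻¹ : SpecialLinearGroup n R) : Matrix n n R)
    rw [e]; exact h

namespace Stmt3Aux


noncomputable section

/-- elementary upper triangular -/
def Eg (t : ℤ_[3]) : SL(2, ℤ_[3]) :=
  ⟨!![1, t; 0, 1], by simp [Matrix.det_fin_two_of]⟩

def Fg (t : ℤ_[3]) : SL(2, ℤ_[3]) :=
  ⟨!![1, 0; t, 1], by simp [Matrix.det_fin_two_of]⟩

def Hg (u v : ℤ_[3]) (huv : u * v = 1) : SL(2, ℤ_[3]) :=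
  ⟨!![u, 0; 0, v], by simp [Matrix.det_fin_two_of, huv]⟩

def Mg (s t : ℤ_[3]) : SL(2, ℤ_[3]) :=
  ⟨!![1 + s*t + s^2*t^2, -(s^2*t); s*t^2, 1 - s*t], by
    simp [Matrix.det_fin_two_of]; ring⟩

@[simp] lemma coe_Eg (t : ℤ_[3]) :
    (Eg t : Matrix (Fin 2) (Fin 2) ℤ_[3]) = !![1, t; 0, 1] := rfl
@[simp] lemma coe_Fg (t : ℤ_[3]) :
    (Fg t : Matrix (Fin 2) (Fin 2) ℤ_[3]) = !![1, 0; t, 1] := rfl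
@[simp] lemma coe_Hg (u v : ℤ_[3]) (huv : u * v = 1) :
    (Hg u v huv : Matrix (Fin 2) (Fin 2) ℤ_[3]) = !![u, 0; 0, v] := rfl
@[simp] lemma coe_Mg (s t : ℤ_[3]) :
    (Mg s t : Matrix (Fin 2) (Fin 2) ℤ_[3]) =
      !![1 + s*t + s^2*t^2, -(s^2*t); s*t^2, 1 - s*t] := rfl

lemma commutatorElement_eq_of {G : Type*} [Group G] {g h z : G}
    (H : g * h = z * (h * g)) : ⁅g, h⁆ = z := by
  rw [commutatorElement_def, H]; group

lemma comm_HE (u v : ℤ_[3]) (huv : u * v = 1) (t : ℤ_[3]) :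
    ⁅Hg u v huv, Eg t⁆ = Eg ((u * u - 1) * t) := by
  apply commutatorElement_eq_of
  apply Subtype.ext
  simp only [Matrix.SpecialLinearGroup.coe_mul, coe_Eg, coe_Hg, Matrix.mul_fin_two]
  ext i j
  fin_cases i <;> fin_cases j <;> simp <;>
    first
      | ring1
      | linear_combination (t : ℤ_[3]) * huv
      | linear_combination (-(t) : ℤ_[3]) * huv
      | linear_combination (u*t) * huv
      | linear_combination (-(u*t)) * huv
      | linear_combination (v*t) * huv
      | linear_combination (-(v*t)) * huv

end

end Stmt3Aux

namespace Stmt3Aux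
noncomputable section

lemma comm_HF (u v : ℤ_[3]) (huv : u * v = 1) (t : ℤ_[3]) :
    ⁅Hg u v huv, Fg t⁆ = Fg ((v * v - 1) * t) := by
  apply commutatorElement_eq_of
  apply Subtype.ext
  simp only [Matrix.SpecialLinearGroup.coe_mul, coe_Fg, coe_Hg, Matrix.mul_fin_two]
  ext i j
  fin_cases i <;> fin_cases j <;> simp <;>
    first
      | ring1
      | linear_combination (t : ℤ_[3]) * huv
      | linear_combination (-(t) : ℤ_[3]) * huv
      | linear_combination (u*t) * huv
      | linear_combination (-(u*t)) * huv
      | linear_combination (v*t) * huv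
      | linear_combination (-(v*t)) * huv

lemma comm_EF (s t : ℤ_[3]) : ⁅Eg s, Fg t⁆ = Mg s t := by
  apply commutatorElement_eq_of
  apply Subtype.ext
  simp only [Matrix.SpecialLinearGroup.coe_mul, coe_Fg, coe_Eg, coe_Mg, Matrix.mul_fin_two]
  ext i j
  fin_cases i <;> fin_cases j <;> simp <;> ring1

variable (N : ℕ → Subgroup SL(2, ℤ_[3]))
variable (hN : ∀ k, ∀ A : SL(2, ℤ_[3]), A ∈ N k ↔
      ∀ i j, (3 : ℤ_[3]) ^ k ∣
        ((A : Matrix (Fin 2) (Fin 2) ℤ_[3]) i j - (1 : Matrix (Fin 2) (Fin 2) ℤ_[3]) i j))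

include hN

lemma mem_E (n : ℕ) (t : ℤ_[3]) (h : (3:ℤ_[3])^n ∣ t) : Eg t ∈ N n := by
  rw [hN]
  intro i j
  fin_cases i <;> fin_cases j <;> simp [Matrix.one_apply] <;> simp [h]

lemma mem_F (n : ℕ) (t : ℤ_[3]) (h : (3:ℤ_[3])^n ∣ t) : Fg t ∈ N n := by
  rw [hN]
  intro i j
  fin_cases i <;> fin_cases j <;> simp [Matrix.one_apply] <;> simp [h]

lemma mem_H (n : ℕ) (u v : ℤ_[3]) (huv : u * v = 1)
    (hu : (3:ℤ_[3])^n ∣ u - 1) (hv : (3:ℤ_[3])^n ∣ v - 1) : Hg u v huv ∈ N n := by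
  rw [hN]
  intro i j
  fin_cases i <;> fin_cases j <;> simp [Matrix.one_apply] <;> simp [hu, hv]

end
end Stmt3Aux

namespace Stmt3Aux
noncomputable section

lemma dvd_mul_left_entries (d : ℤ_[3]) (Z M : Matrix (Fin 2) (Fin 2) ℤ_[3])
    (h : ∀ i j, d ∣ M i j) (i j : Fin 2) : d ∣ (Z * M) i j := by
  rw [Matrix.mul_apply]
  exact Finset.dvd_sum fun l _ => (h l j).mul_left _

lemma dvd_mul_right_entries (d : ℤ_[3]) (M Z : Matrix (Fin 2) (Fin 2) ℤ_[3])
    (h : ∀ i j, d ∣ M i j) (i j : Fin 2) : d ∣ (M * Z) i j := by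
  rw [Matrix.mul_apply]
  exact Finset.dvd_sum fun l _ => (h i l).mul_right _

lemma isUnit_of_not_dvd (x : ℤ_[3]) (h : ¬ (3:ℤ_[3]) ∣ x) : IsUnit x := by
  by_contra hx
  have h1 : ‖x‖ < 1 := PadicInt.not_isUnit_iff.mp hx
  have h2 : ((3:ℕ):ℤ_[3]) ∣ x := (PadicInt.norm_lt_one_iff_dvd x).mp h1
  exact h (by exact_mod_cast h2)

lemma not_dvd_two : ¬ (3:ℤ_[3]) ∣ 2 := by
  intro h
  have := map_dvd (PadicInt.toZMod (p := 3)) h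
  rw [show (PadicInt.toZMod (2:ℤ_[3]) : ZMod 3) = 2 from map_ofNat _ 2,
    show (PadicInt.toZMod (3:ℤ_[3]) : ZMod 3) = 3 from map_ofNat _ 3] at this
  rw [show (3 : ZMod 3) = 0 by decide] at this
  exact absurd (zero_dvd_iff.mp this) (by decide)

lemma not_dvd_one : ¬ (3:ℤ_[3]) ∣ 1 := by
  intro h
  have := map_dvd (PadicInt.toZMod (p := 3)) h
  rw [_root_.map_one, show (PadicInt.toZMod (3:ℤ_[3]) : ZMod 3) = 3 from map_ofNat _ 3,
    show (3 : ZMod 3) = 0 by decide] at this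
  exact absurd (zero_dvd_iff.mp this) (by decide)

lemma isUnit_one_add_pow (k : ℕ) (hk : 1 ≤ k) : IsUnit ((1:ℤ_[3]) + 3^k) := by
  apply isUnit_of_not_dvd
  intro h
  have h3 : (3:ℤ_[3]) ∣ 3^k := dvd_pow_self 3 (by omega)
  have : (3:ℤ_[3]) ∣ 1 := by
    have := h.sub h3
    simpa using this
  exact not_dvd_one this

lemma isUnit_two_add_pow (k : ℕ) (hk : 1 ≤ k) : IsUnit ((2:ℤ_[3]) + 3^k) := by
  apply isUnit_of_not_dvd
  intro h
  have h3 : (3:ℤ_[3]) ∣ 3^k := dvd_pow_self 3 (by omega)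
  have : (3:ℤ_[3]) ∣ 2 := by
    have := h.sub h3
    simpa using this
  exact not_dvd_two this

end
end Stmt3Aux

namespace Stmt3Aux
noncomputable section

variable (N : ℕ → Subgroup SL(2, ℤ_[3]))
variable (hN : ∀ k, ∀ A : SL(2, ℤ_[3]), A ∈ N k ↔
      ∀ i j, (3 : ℤ_[3]) ^ k ∣
        ((A : Matrix (Fin 2) (Fin 2) ℤ_[3]) i j - (1 : Matrix (Fin 2) (Fin 2) ℤ_[3]) i j))

include hN

lemma key (k ℓ : ℕ) (hk : 1 ≤ k) (hℓ : 1 ≤ ℓ) (m : ℕ) (hm : k + ℓ ≤ m)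
    (A : SL(2, ℤ_[3])) (hA : A ∈ N m) :
    ∃ C ∈ ⁅N k, N ℓ⁆, ∀ i j, (3:ℤ_[3])^(m+1) ∣
      ((C : Matrix (Fin 2) (Fin 2) ℤ_[3]) i j - (A : Matrix (Fin 2) (Fin 2) ℤ_[3]) i j) := by
  have hkm : k ≤ m := by omega
  have hlmk : ℓ ≤ m - k := by omega
  have h := (hN m A).mp hA
  have ha : (3:ℤ_[3])^m ∣ (A : Matrix (Fin 2) (Fin 2) ℤ_[3]) 0 0 - 1 := by simpa using h 0 0
  have hb : (3:ℤ_[3])^m ∣ (A : Matrix (Fin 2) (Fin 2) ℤ_[3]) 0 1 := by simpa using h 0 1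
  have hc : (3:ℤ_[3])^m ∣ (A : Matrix (Fin 2) (Fin 2) ℤ_[3]) 1 0 := by simpa using h 1 0
  have hd : (3:ℤ_[3])^m ∣ (A : Matrix (Fin 2) (Fin 2) ℤ_[3]) 1 1 - 1 := by simpa using h 1 1
  set a := (A : Matrix (Fin 2) (Fin 2) ℤ_[3]) 0 0 with ha_def
  set b := (A : Matrix (Fin 2) (Fin 2) ℤ_[3]) 0 1 with hb_def
  set c := (A : Matrix (Fin 2) (Fin 2) ℤ_[3]) 1 0 with hc_def
  set d := (A : Matrix (Fin 2) (Fin 2) ℤ_[3]) 1 1 with hd_def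
  have hdet : a * d - b * c = 1 := by
    have := A.2
    rwa [Matrix.det_fin_two] at this
  obtain ⟨α, hα⟩ := ha
  obtain ⟨b₀, hb₀⟩ := hb
  obtain ⟨c₀, hc₀⟩ := hc
  have ha' : (3:ℤ_[3])^m ∣ a - 1 := ⟨α, hα⟩
  have hb' : (3:ℤ_[3])^m ∣ b := ⟨b₀, hb₀⟩
  have hc' : (3:ℤ_[3])^m ∣ c := ⟨c₀, hc₀⟩
  obtain ⟨U, hU⟩ := isUnit_one_add_pow k hk
  obtain ⟨W, hW⟩ := isUnit_two_add_pow k hk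
  set u : ℤ_[3] := 1 + 3^k with hu_def
  set w : ℤ_[3] := 2 + 3^k with hw_def
  set v : ℤ_[3] := (↑U⁻¹ : ℤ_[3]) with hv_def
  set w' : ℤ_[3] := (↑W⁻¹ : ℤ_[3]) with hw'_def
  have huv : u * v = 1 := by rw [← hU, hv_def]; exact U.mul_inv
  have hww' : w * w' = 1 := by rw [← hW, hw'_def]; exact W.mul_inv
  have hpow : (3:ℤ_[3])^k * 3^(m-k) = 3^m := pow_mul_pow_sub 3 hkm
  set t₁ : ℤ_[3] := 3^(m-k) * (b₀ * w') with ht₁_def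
  set t₂ : ℤ_[3] := -(3^(m-k) * (c₀ * (w' * (u*u)))) with ht₂_def
  set s₃ : ℤ_[3] := 3^k * α with hs₃_def
  set t₃ : ℤ_[3] := (3:ℤ_[3])^(m-k) with ht₃_def
  have e₁ : (u * u - 1) * t₁ = b := by
    rw [ht₁_def, hu_def]
    linear_combination (w*w'*b₀) * hpow + ((3:ℤ_[3])^m*b₀) * hww' + (-1 : ℤ_[3]) * hb₀
  have e₂ : (v * v - 1) * t₂ = c := by
    rw [ht₂_def, hu_def]
    linear_combination (w*w'*c₀) * hpow + ((3:ℤ_[3])^m*c₀) * hww'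
      + (-((u*v+1) * 3^(m-k) * c₀ * w')) * huv + (-1 : ℤ_[3]) * hc₀
  have e₃ : s₃ * t₃ = a - 1 := by
    rw [hs₃_def, ht₃_def]
    linear_combination α * hpow + (-1 : ℤ_[3]) * hα
  -- memberships
  have hHk : Hg u v huv ∈ N k := by
    apply mem_H N hN k u v huv
    · exact ⟨1, by rw [hu_def]; ring⟩
    · exact ⟨-v, by linear_combination huv⟩
  have hE₁ : Eg t₁ ∈ N ℓ :=
    mem_E N hN ℓ t₁ (dvd_mul_of_dvd_left (pow_dvd_pow 3 hlmk) _)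
  have hF₂ : Fg t₂ ∈ N ℓ :=
    mem_F N hN ℓ t₂ ((dvd_mul_of_dvd_left (pow_dvd_pow 3 hlmk) _).neg_right)
  have hE₃ : Eg s₃ ∈ N k := mem_E N hN k s₃ (dvd_mul_right _ _)
  have hF₃ : Fg t₃ ∈ N ℓ := mem_F N hN ℓ t₃ (pow_dvd_pow 3 hlmk)
  refine ⟨⁅Eg s₃, Fg t₃⁆ * (⁅Hg u v huv, Eg t₁⁆ * ⁅Hg u v huv, Fg t₂⁆),
    mul_mem (Subgroup.commutator_mem_commutator hE₃ hF₃)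
      (mul_mem (Subgroup.commutator_mem_commutator hHk hE₁)
        (Subgroup.commutator_mem_commutator hHk hF₂)), ?_⟩
  -- divisibility helpers
  have key2 : ∀ x y : ℤ_[3], (3:ℤ_[3])^m ∣ x → (3:ℤ_[3])^m ∣ y → (3:ℤ_[3])^(m+1) ∣ x * y := by
    intro x y hx hy
    calc (3:ℤ_[3])^(m+1) ∣ 3^m * 3^m := by rw [← pow_add]; exact pow_dvd_pow 3 (by omega)
    _ ∣ x * y := mul_dvd_mul hx hy
  have keyk : ∀ x : ℤ_[3], (3:ℤ_[3])^m ∣ x → (3:ℤ_[3])^(m+1) ∣ 3^k * x := by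
    intro x hx
    calc (3:ℤ_[3])^(m+1) ∣ 3^k * 3^m := by rw [← pow_add]; exact pow_dvd_pow 3 (by omega)
    _ ∣ 3^k * x := mul_dvd_mul_left _ hx
  have keymk : ∀ x : ℤ_[3], (3:ℤ_[3])^m ∣ x → (3:ℤ_[3])^(m+1) ∣ 3^(m-k) * x := by
    intro x hx
    calc (3:ℤ_[3])^(m+1) ∣ 3^(m-k) * 3^m := by rw [← pow_add]; exact pow_dvd_pow 3 (by omega)
    _ ∣ 3^(m-k) * x := mul_dvd_mul_left _ hx
  intro i j
  rw [comm_EF, comm_HE, comm_HF, e₁, e₂]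
  fin_cases i <;> fin_cases j <;>
    simp [Matrix.SpecialLinearGroup.coe_mul, Matrix.mul_fin_two, ← ha_def, ← hb_def, ← hc_def, ← hd_def]
  · have claim : (1 + s₃ * t₃ + s₃ ^ 2 * t₃ ^ 2) * (1 + b * c) + -(s₃ ^ 2 * t₃ * c) - a
        = (a-1)*(a-1) + (b*c)*(a + (a-1)*(a-1)) + -(((a-1)*c) * s₃) := by
      linear_combination ((1+b*c)*(1+s₃*t₃+(a-1)) - s₃*c) * e₃
    rw [claim]
    exact dvd_add (dvd_add (key2 _ _ ha' ha') ((key2 _ _ hb' hc').mul_right _))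
      (dvd_neg.mpr ((key2 _ _ ha' hc').mul_right s₃))
  · have claim : (1 + s₃ * t₃ + s₃ ^ 2 * t₃ ^ 2) * b + -(s₃ ^ 2 * t₃) - b
        = ((a-1)*b)*a + -((3^k*(a-1))*α) := by
      linear_combination (b*(1+s₃*t₃+(a-1)) - s₃) * e₃
    rw [claim]
    exact dvd_add ((key2 _ _ ha' hb').mul_right a) (dvd_neg.mpr ((keyk _ ha').mul_right α))
  · have claim : s₃ * t₃ ^ 2 * (1 + b * c) + (1 - s₃ * t₃) * c - c
        = (3^(m-k)*(a-1))*(1+b*c) + -((a-1)*c) := by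
      linear_combination (t₃*(1+b*c) - c) * e₃
    rw [claim]
    exact dvd_add ((keymk _ ha').mul_right _) (dvd_neg.mpr (key2 _ _ ha' hc'))
  · have claim : s₃ * t₃ ^ 2 * b + (1 - s₃ * t₃) - d
        = (3^(m-k)*(a-1))*b + ((a-1)*(d-1) + -(b*c)) := by
      linear_combination (t₃*b - 1) * e₃ + (-1 : ℤ_[3]) * hdet
    rw [claim]
    exact dvd_add ((keymk _ ha').mul_right b)
      (dvd_add (key2 _ _ ha' hd) (dvd_neg.mpr (key2 _ _ hb' hc')))

end
end Stmt3Aux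

/-- For all `k, ℓ ≥ 1`, the closure of the commutator subgroup `[N_k, N_ℓ]`
in `SL₂(ℤ₃)` equals `N_{k+ℓ}`. -/
theorem stmt_3 (N : ℕ → Subgroup SL(2, ℤ_[3]))
    (hN : ∀ k, ∀ A : SL(2, ℤ_[3]), A ∈ N k ↔
      ∀ i j, (3 : ℤ_[3]) ^ k ∣
        ((A : Matrix (Fin 2) (Fin 2) ℤ_[3]) i j - (1 : Matrix (Fin 2) (Fin 2) ℤ_[3]) i j)) :
    ∀ k ℓ : ℕ, 1 ≤ k → 1 ≤ ℓ →
      (⁅N k, N ℓ⁆ : Subgroup SL(2, ℤ_[3])).topologicalClosure = N (k + ℓ) := by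
  intro k ℓ hk hℓ
  apply le_antisymm
  · -- closure of commutator ≤ N (k+ℓ)
    apply Subgroup.topologicalClosure_minimal
    · rw [Subgroup.commutator_le]
      intro X hX Y hY
      have hX' := (hN k X).mp hX
      have hY' := (hN ℓ Y).mp hY
      rw [hN]
      intro i j
      set MX := (X : Matrix (Fin 2) (Fin 2) ℤ_[3]) with hMX
      set MY := (Y : Matrix (Fin 2) (Fin 2) ℤ_[3]) with hMY
      have h1 : ((⁅X, Y⁆ : SL(2,ℤ_[3])) : Matrix (Fin 2) (Fin 2) ℤ_[3])
          = MX * MY * ((X⁻¹ : SL(2,ℤ_[3])) : Matrix (Fin 2) (Fin 2) ℤ_[3])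
            * ((Y⁻¹ : SL(2,ℤ_[3])) : Matrix (Fin 2) (Fin 2) ℤ_[3]) := by
        rw [commutatorElement_def]
        simp [Matrix.SpecialLinearGroup.coe_mul, hMX, hMY]
      have hone : MY * MX * (((X⁻¹ : SL(2,ℤ_[3])) : Matrix (Fin 2) (Fin 2) ℤ_[3])
          * ((Y⁻¹ : SL(2,ℤ_[3])) : Matrix (Fin 2) (Fin 2) ℤ_[3])) = 1 := by
        rw [hMX, hMY, ← Matrix.SpecialLinearGroup.coe_mul, ← Matrix.SpecialLinearGroup.coe_mul,
          ← Matrix.SpecialLinearGroup.coe_mul]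
        rw [show Y * X * (X⁻¹ * Y⁻¹) = 1 by group]
        simp
      have hsub : ((⁅X, Y⁆ : SL(2,ℤ_[3])) : Matrix (Fin 2) (Fin 2) ℤ_[3]) - 1
          = ((MX - 1) * (MY - 1) - (MY - 1) * (MX - 1))
            * (((X⁻¹ : SL(2,ℤ_[3])) : Matrix (Fin 2) (Fin 2) ℤ_[3])
              * ((Y⁻¹ : SL(2,ℤ_[3])) : Matrix (Fin 2) (Fin 2) ℤ_[3])) := by
        rw [h1]
        have h2 : ((MX - 1) * (MY - 1) - (MY - 1) * (MX - 1))
            * (((X⁻¹ : SL(2,ℤ_[3])) : Matrix (Fin 2) (Fin 2) ℤ_[3])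
              * ((Y⁻¹ : SL(2,ℤ_[3])) : Matrix (Fin 2) (Fin 2) ℤ_[3]))
            = MX * MY * (((X⁻¹ : SL(2,ℤ_[3])) : Matrix (Fin 2) (Fin 2) ℤ_[3])
              * ((Y⁻¹ : SL(2,ℤ_[3])) : Matrix (Fin 2) (Fin 2) ℤ_[3]))
              - MY * MX * (((X⁻¹ : SL(2,ℤ_[3])) : Matrix (Fin 2) (Fin 2) ℤ_[3])
              * ((Y⁻¹ : SL(2,ℤ_[3])) : Matrix (Fin 2) (Fin 2) ℤ_[3])) := by
          noncomm_ring
        rw [h2, hone, ← mul_assoc]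
      rw [← Matrix.sub_apply, hsub]
      apply Stmt3Aux.dvd_mul_right_entries
      intro i' j'
      rw [Matrix.sub_apply]
      apply dvd_sub
      · rw [Matrix.mul_apply]
        apply Finset.dvd_sum
        intro l _
        rw [pow_add]
        exact mul_dvd_mul (by simpa [Matrix.sub_apply] using hX' i' l)
          (by simpa [Matrix.sub_apply] using hY' l j')
      · rw [Matrix.mul_apply]
        apply Finset.dvd_sum
        intro l _
        rw [pow_add, mul_comm ((3:ℤ_[3])^k)]
        exact mul_dvd_mul (by simpa [Matrix.sub_apply] using hY' i' l)
          (by simpa [Matrix.sub_apply] using hX' l j')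
    · -- N (k+ℓ) is closed
      have hset : ((N (k+ℓ)) : Set SL(2, ℤ_[3]))
          = ⋂ (i : Fin 2), ⋂ (j : Fin 2),
            {A : SL(2, ℤ_[3]) | ‖(A : Matrix (Fin 2) (Fin 2) ℤ_[3]) i j
              - (1 : Matrix (Fin 2) (Fin 2) ℤ_[3]) i j‖ ≤ (3:ℝ) ^ (-(k+ℓ:ℕ) : ℤ)} := by
        ext A
        simp only [SetLike.mem_coe, Set.mem_iInter, Set.mem_setOf_eq, hN]
        refine forall_congr' fun i => forall_congr' fun j => ?_
        rw [show ((3:ℝ) ^ (-(k+ℓ:ℕ) : ℤ)) = ((3:ℕ):ℝ) ^ (-(k+ℓ:ℕ) : ℤ) by norm_num]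
        rw [PadicInt.norm_le_pow_iff_mem_span_pow, Ideal.mem_span_singleton]
        constructor
        · intro h; exact_mod_cast h
        · intro h; exact_mod_cast h
      rw [hset]
      refine isClosed_iInter fun i => isClosed_iInter fun j => ?_
      exact isClosed_le (((continuous_subtype_val.matrix_elem i j).sub continuous_const).norm)
        continuous_const
  · -- N (k+ℓ) ≤ closure
    intro A hA
    have claim : ∀ n : ℕ, ∃ P, P ∈ ⁅N k, N ℓ⁆ ∧ ∀ i j, (3:ℤ_[3])^(k+ℓ+n) ∣
        ((P : Matrix (Fin 2) (Fin 2) ℤ_[3]) i j - (A : Matrix (Fin 2) (Fin 2) ℤ_[3]) i j) := by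
      intro n
      induction n with
      | zero =>
        refine ⟨1, one_mem _, fun i j => ?_⟩
        have := (hN (k+ℓ) A).mp hA i j
        rw [Matrix.SpecialLinearGroup.coe_one, dvd_sub_comm]
        simpa using this
      | succ n ih =>
        obtain ⟨P, hP, hPA⟩ := ih
        have hB : P⁻¹ * A ∈ N (k+ℓ+n) := by
          rw [hN]
          intro i j
          have hcoe : ((P⁻¹ * A : SL(2,ℤ_[3])) : Matrix (Fin 2) (Fin 2) ℤ_[3]) - 1
              = ((P⁻¹ : SL(2,ℤ_[3])) : Matrix (Fin 2) (Fin 2) ℤ_[3])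
                * ((A : Matrix (Fin 2) (Fin 2) ℤ_[3]) - (P : Matrix (Fin 2) (Fin 2) ℤ_[3])) := by
            rw [mul_sub, show ((P⁻¹ : SL(2,ℤ_[3])) : Matrix (Fin 2) (Fin 2) ℤ_[3])
                * (P : Matrix (Fin 2) (Fin 2) ℤ_[3]) = 1 from by
              rw [← Matrix.SpecialLinearGroup.coe_mul, inv_mul_cancel, Matrix.SpecialLinearGroup.coe_one],
              Matrix.SpecialLinearGroup.coe_mul]
          rw [← Matrix.sub_apply, hcoe]
          apply Stmt3Aux.dvd_mul_left_entries
          intro i' j'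
          rw [Matrix.sub_apply, dvd_sub_comm]
          exact hPA i' j'
        obtain ⟨C, hC, hCB⟩ := Stmt3Aux.key N hN k ℓ hk hℓ (k+ℓ+n) (by omega) (P⁻¹ * A) hB
        refine ⟨P * C, mul_mem hP hC, fun i j => ?_⟩
        have hcoe2 : ((P * C : SL(2,ℤ_[3])) : Matrix (Fin 2) (Fin 2) ℤ_[3])
            - (A : Matrix (Fin 2) (Fin 2) ℤ_[3])
            = (P : Matrix (Fin 2) (Fin 2) ℤ_[3])
              * ((C : Matrix (Fin 2) (Fin 2) ℤ_[3])
                - ((P⁻¹ * A : SL(2,ℤ_[3])) : Matrix (Fin 2) (Fin 2) ℤ_[3])) := by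
          rw [mul_sub, show (P : Matrix (Fin 2) (Fin 2) ℤ_[3])
              * ((P⁻¹ * A : SL(2,ℤ_[3])) : Matrix (Fin 2) (Fin 2) ℤ_[3])
              = (A : Matrix (Fin 2) (Fin 2) ℤ_[3]) from by
            rw [← Matrix.SpecialLinearGroup.coe_mul, mul_inv_cancel_left],
            Matrix.SpecialLinearGroup.coe_mul]
        rw [← Matrix.sub_apply, show k+ℓ+(n+1) = (k+ℓ+n)+1 by omega, hcoe2]
        apply Stmt3Aux.dvd_mul_left_entries
        intro i' j'
        rw [Matrix.sub_apply]
        exact hCB i' j'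
    choose P hPmem hPdvd using claim
    rw [← SetLike.mem_coe, Subgroup.topologicalClosure_coe]
    refine mem_closure_of_tendsto (f := P) (b := Filter.atTop) ?_
      (Filter.Eventually.of_forall fun n => hPmem n)
    refine (Topology.IsInducing.tendsto_nhds_iff (Topology.IsInducing.subtypeVal
      (t := {M : Matrix (Fin 2) (Fin 2) ℤ_[3] | M.det = 1}))).mpr ?_
    show Filter.Tendsto (fun n => ((P n : SL(2,ℤ_[3])) : Matrix (Fin 2) (Fin 2) ℤ_[3]))
      Filter.atTop (nhds ((A : SL(2,ℤ_[3])) : Matrix (Fin 2) (Fin 2) ℤ_[3]))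
    refine tendsto_pi_nhds.mpr fun i => tendsto_pi_nhds.mpr fun j => ?_
    rw [← tendsto_sub_nhds_zero_iff]
    apply squeeze_zero_norm (a := fun n => ((3:ℝ)⁻¹)^n)
    · intro n
      have h1 : ‖(P n : Matrix (Fin 2) (Fin 2) ℤ_[3]) i j
          - (A : Matrix (Fin 2) (Fin 2) ℤ_[3]) i j‖ ≤ ((3:ℕ):ℝ) ^ (-(k+ℓ+n:ℕ) : ℤ) := by
        rw [PadicInt.norm_le_pow_iff_mem_span_pow, Ideal.mem_span_singleton]
        exact_mod_cast hPdvd n i j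
      refine h1.trans ?_
      rw [show ((3:ℕ):ℝ) ^ (-(k+ℓ+n:ℕ) : ℤ) = ((3:ℝ)⁻¹)^(k+ℓ+n) by
        rw [_root_.zpow_neg, ← _root_.inv_zpow, zpow_natCast]; norm_num]
      exact pow_le_pow_of_le_one (by norm_num) (by norm_num) (by omega)
    · exact tendsto_pow_atTop_nhds_zero_of_lt_one (by norm_num) (by norm_num)
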